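/- Let ε be a real number with √2 − 1 ≤ ε < 1, and let Z be a nonnegative real-valued random variable with finite second moment satisfying σ²[Z] ≤ E[Z]. If E[Z] ≥ 2·pivot(ε), then P(Z < E[Z]/(1+ε)) ≤ 1/20.68. -/

import Mathlib

open MeasureTheory ProbabilityTheory

/-- `pivot ε = 9.84·(1 + 1/ε)²`. -/
noncomputable def pivot (ε : ℝ) : ℝ := 9.84 * (1 + 1 / ε) ^ 2

/-- `thresh ε = 9.84·(1 + ε/(1+ε))·(1 + 1/ε)²`. -/
noncomputable def thresh (ε : ℝ) : ℝ := 9.84 * (1 + ε / (1 + ε)) * (1 + 1 / ε) ^ 2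

theorem stmt_13 {Ω : Type*} [MeasurableSpace Ω] (μ : Measure Ω) [IsProbabilityMeasure μ]
    (ε : ℝ) (hlo : Real.sqrt 2 - 1 ≤ ε) (hhi : ε < 1)
    (Z : Ω → ℝ) (hZnonneg : ∀ ω, 0 ≤ Z ω) (hL2 : MemLp Z 2 μ)
    (hvar : variance Z μ ≤ ∫ x, Z x ∂μ)
    (hE : 2 * pivot ε ≤ ∫ x, Z x ∂μ) :
    (μ {ω | Z ω < (∫ x, Z x ∂μ) / (1 + ε)}).toReal ≤ 1 / 20.68 := by
  have hsqrt : (1:ℝ) < Real.sqrt 2 := by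
    nlinarith [Real.sq_sqrt (by norm_num : (0:ℝ) ≤ 2), Real.sqrt_nonneg 2]
  have hε : 0 < ε := by linarith
  have h1ε : (0:ℝ) < 1 + ε := by linarith
  set m : ℝ := ∫ x, Z x ∂μ with hm_def
  set v : ℝ := variance Z μ with hv_def
  have hv : 0 ≤ v := variance_nonneg Z μ
  have hpivot : 0 < pivot ε := by
    unfold pivot; positivity
  have hm : 0 < m := lt_of_lt_of_le (by linarith) hE
  set t : ℝ := m * ε / (1 + ε) with ht_def
  have ht : 0 < t := by positivity
  set u : ℝ := v / t with hu_def
  have hu : 0 ≤ u := by positivity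
  clear_value u
  clear_value t
  clear_value v
  clear_value m
  have hZint : Integrable Z μ := hL2.integrable (by norm_num)
  have hW : MemLp (fun ω => m + u - Z ω) 2 μ := (memLp_const (m + u)).sub hL2
  have hf_int : Integrable (fun ω => (m + u - Z ω) ^ 2) μ := hW.integrable_sq
  -- the value of the integral of the squared shift
  have hveq : v = ∫ x, (Z x - m) ^ 2 ∂μ := by
    rw [hv_def, variance_eq_integral hL2.aemeasurable, ← hm_def]
  have hsqint : Integrable (fun x => (Z x - m) ^ 2) μ :=
    (hL2.sub (memLp_const m)).integrable_sq
  have hZm : Integrable (fun x => Z x - m) μ := hZint.sub (integrable_const m)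
  have hint_f : ∫ x, (m + u - Z x) ^ 2 ∂μ = v + u ^ 2 := by
    have key : ∀ x : Ω, (m + u - Z x) ^ 2
        = (Z x - m) ^ 2 - (2 * u) * (Z x - m) + u ^ 2 := fun x => by ring
    rw [show (fun x => (m + u - Z x) ^ 2)
        = fun x => (Z x - m) ^ 2 - (2 * u) * (Z x - m) + u ^ 2 from funext key]
    rw [integral_add (by exact (hsqint.sub (hZm.const_mul _))) (integrable_const _),
      integral_sub hsqint (hZm.const_mul _), integral_const_mul,
      integral_sub hZint (integrable_const m), integral_const]
    simp [← hveq, ← hm_def]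
  -- Markov
  have markov := mul_meas_ge_le_integral_of_nonneg
    (ae_of_all μ fun x => sq_nonneg (m + u - Z x)) hf_int ((t + u) ^ 2)
  rw [hint_f] at markov
  -- event inclusion
  have hsub : {ω | Z ω < m / (1 + ε)} ⊆ {x | (t + u) ^ 2 ≤ (m + u - Z x) ^ 2} := by
    intro x hx
    simp only [Set.mem_setOf_eq] at hx ⊢
    have hmt : m - t = m / (1 + ε) := by
      rw [ht_def]; field_simp; ring
    have hle : t + u ≤ m + u - Z x := by
      have : Z x < m - t := by rw [hmt]; exact hx
      linarith
    exact pow_le_pow_left₀ (by positivity) hle 2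
  have hmeas_le : (μ {ω | Z ω < m / (1 + ε)}).toReal
      ≤ (μ {x | (t + u) ^ 2 ≤ (m + u - Z x) ^ 2}).toReal :=
    ENNReal.toReal_mono (measure_ne_top μ _) (measure_mono hsub)
  have htv : 0 < t ^ 2 + v := by positivity
  have hmark2 : (μ {x | (t + u) ^ 2 ≤ (m + u - Z x) ^ 2}).toReal
      ≤ (v + u ^ 2) / (t + u) ^ 2 := by
    rw [le_div_iff₀ (by positivity)]
    rw [measureReal_def] at markov
    linarith [markov]
  have hcancel : (v + u ^ 2) / (t + u) ^ 2 = v / (t ^ 2 + v) := by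
    rw [hu_def]
    rw [div_eq_div_iff (by positivity) htv.ne']
    field_simp
  -- main numeric inequality
  have hE' : 19.68 * (1 + ε) ^ 2 / ε ^ 2 ≤ m := by
    have : 2 * pivot ε = 19.68 * (1 + ε) ^ 2 / ε ^ 2 := by
      unfold pivot; field_simp; ring
    linarith [hE, this.symm.le]
  have hE'' : 19.68 * (1 + ε) ^ 2 ≤ m * ε ^ 2 := by
    rw [div_le_iff₀ (by positivity)] at hE'; linarith
  have ht2 : 19.68 * v ≤ t ^ 2 := by
    have htsq : t ^ 2 = m ^ 2 * ε ^ 2 / (1 + ε) ^ 2 := by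
      rw [ht_def]; field_simp
    have h2 : 19.68 * m ≤ t ^ 2 := by
      rw [htsq, le_div_iff₀ (by positivity)]
      have h3 := mul_le_mul_of_nonneg_left hE'' hm.le
      nlinarith [h3]
    have h1 : 19.68 * v ≤ 19.68 * m := by nlinarith [hvar]
    linarith
  have hfinal : v / (t ^ 2 + v) ≤ 1 / 20.68 := by
    rw [div_le_div_iff₀ htv (by norm_num)]
    linarith [ht2, hv]
  calc (μ {ω | Z ω < m / (1 + ε)}).toReal
      ≤ (v + u ^ 2) / (t + u) ^ 2 := le_trans hmeas_le hmark2
    _ = v / (t ^ 2 + v) := hcancel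
    _ ≤ 1 / 20.68 := hfinal
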